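/- For any A, B ∈ SU(2), the conjugated matrix E* (A ⊗ B) E is a real orthogonal matrix in SO(4), where E is the entangler matrix. -/
import Mathlib

set_option linter.unusedTactic false
set_option linter.unreachableTactic false

open Matrix Complex Kronecker

noncomputable def entangler : Matrix (Fin 4) (Fin 4) ℂ :=
  ((Real.sqrt 2 : ℂ))⁻¹ • !![1, I, 0, 0; 0, 0, I, 1; 0, 0, I, -1; 1, -I, 0, 0]

lemma kron_conjTranspose (A B : Matrix (Fin 2) (Fin 2) ℂ) :
    (A ⊗ₖ B)ᴴ = Aᴴ ⊗ₖ Bᴴ := by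
  ext ⟨i, i'⟩ ⟨j, j'⟩
  simp [conjTranspose_apply, kroneckerMap_apply, star_mul', mul_comm]

lemma entangler_unitary : entanglerᴴ * entangler = 1 := by
  ext i j
  fin_cases i <;> fin_cases j <;>
    simp [entangler, mul_apply, Fin.sum_univ_four, Matrix.one_apply] <;> ring_nf <;>
    simp [Complex.ext_iff, ← Complex.ofReal_pow, Real.sq_sqrt] <;> norm_num

lemma entangler_unitary' : entangler * entanglerᴴ = 1 := by
  ext i j
  fin_cases i <;> fin_cases j <;>
    simp [entangler, mul_apply, Fin.sum_univ_four, Matrix.one_apply] <;> ring_nf <;>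
    simp [Complex.ext_iff, ← Complex.ofReal_pow, Real.sq_sqrt] <;> norm_num

lemma su2_rel (A : Matrix (Fin 2) (Fin 2) ℂ) (hA : A ∈ Matrix.unitaryGroup (Fin 2) ℂ)
    (hAdet : A.det = 1) : A 1 1 = star (A 0 0) ∧ A 1 0 = -star (A 0 1) := by
  have h1 : A⁻¹ = star A := Matrix.inv_eq_left_inv hA.1
  have h2 : A⁻¹ = A.adjugate := by
    rw [Matrix.inv_def, hAdet]; simp
  have h3 : star A = A.adjugate := h1 ▸ h2
  rw [Matrix.adjugate_fin_two] at h3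
  have e1 := congrFun (congrFun h3 0) 0
  have e2 := congrFun (congrFun h3 0) 1
  simp [Matrix.star_apply] at e1 e2
  refine ⟨by simpa using e1.symm, ?_⟩
  have := congrArg star e2
  simpa using this

set_option maxHeartbeats 2000000 in
lemma prod_explicit (A B : Matrix (Fin 2) (Fin 2) ℂ) :
    entanglerᴴ * (Matrix.reindex finProdFinEquiv finProdFinEquiv (A ⊗ₖ B)) * entangler =
    (2⁻¹ : ℂ) •
    !![A 1 1*B 1 1 + A 1 0*B 1 0 + A 0 1*B 0 1 + A 0 0*B 0 0, -(I*A 1 1*B 1 1) + I*A 1 0*B 1 0 + -(I*A 0 1*B 0 1) + I*A 0 0*B 0 0, I*A 1 1*B 1 0 + I*A 1 0*B 1 1 + I*A 0 1*B 0 0 + I*A 0 0*B 0 1, -A 1 1*B 1 0 + A 1 0*B 1 1 + -A 0 1*B 0 0 + A 0 0*B 0 1;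
      I*A 1 1*B 1 1 + I*A 1 0*B 1 0 + -(I*A 0 1*B 0 1) + -(I*A 0 0*B 0 0), A 1 1*B 1 1 + -A 1 0*B 1 0 + -A 0 1*B 0 1 + A 0 0*B 0 0, -A 1 1*B 1 0 + -A 1 0*B 1 1 + A 0 1*B 0 0 + A 0 0*B 0 1, -(I*A 1 1*B 1 0) + I*A 1 0*B 1 1 + I*A 0 1*B 0 0 + -(I*A 0 0*B 0 1);
      -(I*A 1 1*B 0 1) + -(I*A 1 0*B 0 0) + -(I*A 0 1*B 1 1) + -(I*A 0 0*B 1 0), -A 1 1*B 0 1 + A 1 0*B 0 0 + -A 0 1*B 1 1 + A 0 0*B 1 0, A 1 1*B 0 0 + A 1 0*B 0 1 + A 0 1*B 1 0 + A 0 0*B 1 1, I*A 1 1*B 0 0 + -(I*A 1 0*B 0 1) + I*A 0 1*B 1 0 + -(I*A 0 0*B 1 1);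
      -A 1 1*B 0 1 + -A 1 0*B 0 0 + A 0 1*B 1 1 + A 0 0*B 1 0, I*A 1 1*B 0 1 + -(I*A 1 0*B 0 0) + -(I*A 0 1*B 1 1) + I*A 0 0*B 1 0, -(I*A 1 1*B 0 0) + -(I*A 1 0*B 0 1) + I*A 0 1*B 1 0 + I*A 0 0*B 1 1, A 1 1*B 0 0 + -A 1 0*B 0 1 + -A 0 1*B 1 0 + A 0 0*B 1 1] := by
  have hk : Matrix.reindex finProdFinEquiv finProdFinEquiv (A ⊗ₖ B) =
    !![A 0 0 * B 0 0, A 0 0 * B 0 1, A 0 1 * B 0 0, A 0 1 * B 0 1;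
       A 0 0 * B 1 0, A 0 0 * B 1 1, A 0 1 * B 1 0, A 0 1 * B 1 1;
       A 1 0 * B 0 0, A 1 0 * B 0 1, A 1 1 * B 0 0, A 1 1 * B 0 1;
       A 1 0 * B 1 0, A 1 0 * B 1 1, A 1 1 * B 1 0, A 1 1 * B 1 1] := by
    ext i j
    fin_cases i <;> fin_cases j <;>
      simp [Matrix.reindex_apply, Matrix.submatrix_apply, kroneckerMap_apply] <;> rfl
  rw [hk]
  have h2 : ((Real.sqrt 2 : ℂ))⁻¹ * ((Real.sqrt 2 : ℂ))⁻¹ = 2⁻¹ := by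
    rw [← mul_inv]; norm_cast
    rw [Real.mul_self_sqrt (by norm_num)]; norm_num
  ext i j
  fin_cases i <;> fin_cases j <;>
    · simp [entangler, mul_apply, Fin.sum_univ_four]
      ring_nf
      simp only [Complex.I_sq, show ((Real.sqrt 2 : ℂ))⁻¹ ^ 2 = 2⁻¹ by rw [sq]; exact h2]
      ring_nf

set_option maxHeartbeats 4000000 in
theorem magic_basis_tensor_real (A B : Matrix (Fin 2) (Fin 2) ℂ)
    (hA : A ∈ Matrix.unitaryGroup (Fin 2) ℂ) (hAdet : A.det = 1)
    (hB : B ∈ Matrix.unitaryGroup (Fin 2) ℂ) (hBdet : B.det = 1) :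
    ∃ V : Matrix (Fin 4) (Fin 4) ℝ,
      V ∈ Matrix.orthogonalGroup (Fin 4) ℝ ∧ V.det = 1 ∧
      entanglerᴴ * (Matrix.reindex finProdFinEquiv finProdFinEquiv (A ⊗ₖ B)) * entangler
        = V.map Complex.ofReal := by
  set K := Matrix.reindex finProdFinEquiv finProdFinEquiv (A ⊗ₖ B) with hK
  set M := entanglerᴴ * K * entangler with hM
  -- K is unitary
  have hA1 : Aᴴ * A = 1 := hA.1
  have hB1 : Bᴴ * B = 1 := hB.1
  have hKu : Kᴴ * K = 1 := by
    rw [hK, Matrix.conjTranspose_reindex]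
    rw [Matrix.reindex_apply, Matrix.reindex_apply, Matrix.submatrix_mul_equiv,
      kron_conjTranspose, ← Matrix.mul_kronecker_mul, hA1, hB1, Matrix.one_kronecker_one,
      Matrix.submatrix_one_equiv]
  -- M is unitary
  have hMu : Mᴴ * M = 1 := by
    calc Mᴴ * M = entanglerᴴ * (Kᴴ * ((entangler * entanglerᴴ) * (K * entangler))) := by
          rw [hM]
          simp only [Matrix.conjTranspose_mul, Matrix.conjTranspose_conjTranspose,
            Matrix.mul_assoc]
      _ = 1 := by
          rw [entangler_unitary', Matrix.one_mul, ← Matrix.mul_assoc Kᴴ, hKu, Matrix.one_mul,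
            entangler_unitary]
  -- det M = 1
  have hdetE : entanglerᴴ.det * entangler.det = 1 := by
    rw [← Matrix.det_mul, entangler_unitary, Matrix.det_one]
  have hdetK : K.det = 1 := by
    rw [hK, Matrix.det_reindex_self, Matrix.det_kronecker, hAdet, hBdet]
    simp
  have hdetM : M.det = 1 := by
    rw [hM, Matrix.det_mul, Matrix.det_mul, hdetK]
    rw [mul_one, hdetE]
  -- M is entrywise real
  obtain ⟨ha, hb⟩ := su2_rel A hA hAdet
  obtain ⟨hc, hd⟩ := su2_rel B hB hBdet
  have hreal : ∀ i j, star (M i j) = M i j := by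
    intro i j
    rw [hM, prod_explicit]
    fin_cases i <;> fin_cases j <;>
      · simp [Matrix.smul_apply, ha, hb, hc, hd, star_mul', Complex.conj_I, map_ofNat]
        ring_nf
  -- define V
  refine ⟨M.map Complex.re, ?_, ?_, ?_⟩
  case refine_3 =>
    show M = _
    ext i j
    simp only [Matrix.map_apply, Matrix.map_apply]
    exact (Complex.conj_eq_iff_re.mp (hreal i j)).symm
  case refine_1 =>
    rw [Matrix.mem_orthogonalGroup_iff']
    have hmap : ((star (M.map Complex.re) * M.map Complex.re).map
        (Complex.ofReal : ℝ → ℂ)) = (1 : Matrix (Fin 4) (Fin 4) ℝ).map Complex.ofReal := by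
      have h1 : (M.map Complex.re).map (Complex.ofReal : ℝ → ℂ) = M := by
        ext i j
        simp only [Matrix.map_apply]
        exact Complex.conj_eq_iff_re.mp (hreal i j)
      have hmm : (star (M.map Complex.re) * M.map Complex.re).map (Complex.ofReal : ℝ → ℂ)
          = (star (M.map Complex.re)).map (Complex.ofReal : ℝ → ℂ)
            * (M.map Complex.re).map (Complex.ofReal : ℝ → ℂ) :=
        Matrix.map_mul (f := Complex.ofRealHom)
      rw [hmm]
      have h2 : (star (M.map Complex.re)).map (Complex.ofReal : ℝ → ℂ) = Mᴴ := by
        ext i j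
        simp only [Matrix.map_apply, Matrix.star_eq_conjTranspose, Matrix.conjTranspose_apply,
          star_trivial]
        calc ((M.map Complex.re j i : ℝ) : ℂ) = M j i := Complex.conj_eq_iff_re.mp (hreal j i)
          _ = star (M j i) := (hreal j i).symm
      show (star (M.map Complex.re)).map _ * (M.map Complex.re).map _ = _
      rw [h1, h2, hMu]
      ext i j
      simp [Matrix.one_apply, apply_ite]
    have : ∀ (X Y : Matrix (Fin 4) (Fin 4) ℝ),
        X.map (Complex.ofReal : ℝ → ℂ) = Y.map Complex.ofReal → X = Y := by
      intro X Y hXY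
      ext i j
      have := congrFun (congrFun hXY i) j
      simpa [Matrix.map_apply] using this
    exact this _ _ hmap
  case refine_2 =>
    have h1 : (M.map Complex.re).map (Complex.ofReal : ℝ → ℂ) = M := by
      ext i j
      simp only [Matrix.map_apply]
      exact Complex.conj_eq_iff_re.mp (hreal i j)
    have hh : ((M.map Complex.re).det : ℂ) = 1 := by
      have := RingHom.map_det Complex.ofRealHom (M.map Complex.re)
      calc ((M.map Complex.re).det : ℂ)
          = ((M.map Complex.re).map (Complex.ofReal : ℝ → ℂ)).det := this
        _ = 1 := by rw [h1, hdetM]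
    exact_mod_cast hh
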